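/- arXiv:2006.14057 — 4 statements merged into one kernel-verified Lean document; each statement's English description precedes it below -/
import Mathlib

section
/- Let H be an optimal Hermite Normal Form row basis of a full-rank integer lattice L ⊆ ℤ^N with D = det(L) ≥ 1. Then there exists a nonzero coefficient vector x ∈ ℤ^N with |x_i| ≤ √N · D^{1/N} for 1 ≤ i ≤ N−1 and |x_N| ≤ N^{3/2} · D^{1/N}, such that the lattice vector x·H has Euclidean norm equal to λ₁(L); i.e., a shortest vector of L is represented by coefficients lying in the box [−N^{3/2} D^{1/N}, N^{3/2} D^{1/N}]^N. -/
open Matrix Real Finset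

/-- The Euclidean norm of a vector in `ℝ^N`. -/
noncomputable def euclNorm {N : ℕ} (v : Fin N → ℝ) : ℝ := Real.sqrt (∑ i, v i ^ 2)

/-- `λ₁(L)` for the integer lattice `L = {x·H : x ∈ ℤ^N}` generated by the rows of
the integer matrix `H`: the minimum Euclidean norm of a nonzero lattice vector. -/
noncomputable def lambda1Int {N : ℕ} (H : Matrix (Fin N) (Fin N) ℤ) : ℝ :=
  sInf {r : ℝ | ∃ x : Fin N → ℤ, x ≠ 0 ∧ r = euclNorm (fun j => ((x ᵥ* H) j : ℝ))}

lemma euclNorm_nonneg {N : ℕ} (v : Fin N → ℝ) : 0 ≤ euclNorm v := Real.sqrt_nonneg _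

/-- for an optimal HNF row basis `H` of a full-rank integer lattice with
determinant `D ≥ 1`, a shortest vector of the lattice is represented by a nonzero
coefficient vector `x ∈ ℤ^N` with `|x i| ≤ √N · D^{1/N}` for `i ≠ N-1` and
`|x_{N-1}| ≤ N^{3/2} · D^{1/N}`. -/
theorem hnf_shortest_vector_in_box (N : ℕ) (hN : 0 < N) (D : ℤ) (hD : 1 ≤ D)
    (H : Matrix (Fin N) (Fin N) ℤ)
    (lastIdx : Fin N) (hlast : (lastIdx : ℕ) = N - 1)
    (hdet : H.det = D)
    (hdiag : ∀ i : Fin N, i ≠ lastIdx → H i i = 1)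
    (hDD : H lastIdx lastIdx = D)
    (hoff : ∀ i j : Fin N, i ≠ j → j ≠ lastIdx → H i j = 0)
    (hcol : ∀ i : Fin N, i ≠ lastIdx → 0 ≤ H i lastIdx ∧ H i lastIdx < D) :
    ∃ x : Fin N → ℤ, x ≠ 0 ∧
      (∀ i : Fin N, i ≠ lastIdx →
        |((x i : ℤ) : ℝ)| ≤ Real.sqrt N * (D : ℝ) ^ ((1 : ℝ) / N)) ∧
      |((x lastIdx : ℤ) : ℝ)| ≤ (N : ℝ) ^ ((3 : ℝ) / 2) * (D : ℝ) ^ ((1 : ℝ) / N) ∧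
      euclNorm (fun j => ((x ᵥ* H) j : ℝ)) = lambda1Int H := by
  classical
  -- coordinates of vecMul
  have hcoord : ∀ (x : Fin N → ℤ) (j : Fin N), j ≠ lastIdx → (x ᵥ* H) j = x j := by
    intro x j hj
    have h1 : (x ᵥ* H) j = ∑ i, x i * H i j := by
      simp [Matrix.vecMul, dotProduct]
    rw [h1, Finset.sum_eq_single j]
    · rw [hdiag j hj, mul_one]
    · intro i _ hij
      rw [hoff i j hij hj, mul_zero]
    · intro h; exact absurd (Finset.mem_univ j) h
  have hlastc : ∀ x : Fin N → ℤ, (x ᵥ* H) lastIdx = ∑ i, x i * H i lastIdx := by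
    intro x; simp [Matrix.vecMul, dotProduct]
  -- the functional cutting out the lattice mod D
  set F : (Fin N → ℤ) → ℤ :=
    fun v => v lastIdx - ∑ i ∈ Finset.univ.erase lastIdx, v i * H i lastIdx with hF
  have hmem : ∀ v : Fin N → ℤ, D ∣ F v → ∃ x : Fin N → ℤ, x ᵥ* H = v := by
    intro v hdvd
    obtain ⟨k, hk⟩ := hdvd
    simp only [hF] at hk
    refine ⟨fun i => if i = lastIdx then k else v i, ?_⟩
    funext j
    by_cases hj : j = lastIdx
    · rw [hj]
      rw [hlastc, ← Finset.sum_erase_add _ _ (Finset.mem_univ lastIdx)]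
      have h2 : ∑ i ∈ Finset.univ.erase lastIdx,
          (if i = lastIdx then k else v i) * H i lastIdx
          = ∑ i ∈ Finset.univ.erase lastIdx, v i * H i lastIdx := by
        apply Finset.sum_congr rfl
        intro i hi
        rw [if_neg (Finset.ne_of_mem_erase hi)]
      rw [h2, if_pos rfl, hDD]
      linarith [hk]
    · rw [hcoord _ j hj, if_neg hj]
  -- pigeonhole setup
  have hNne : (N:ℝ) ≠ 0 := Nat.cast_ne_zero.mpr hN.ne'
  have hDR : (1:ℝ) ≤ (D:ℝ) := by exact_mod_cast hD
  have hrp1 : (1:ℝ) ≤ (D:ℝ) ^ ((1:ℝ)/N) := Real.one_le_rpow hDR (by positivity)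
  set M : ℕ := ⌊(D:ℝ) ^ ((1:ℝ)/N)⌋₊ with hM
  have hMle : (M:ℝ) ≤ (D:ℝ) ^ ((1:ℝ)/N) := Nat.floor_le (by positivity)
  have hlt : (D:ℝ) < ((M:ℝ)+1) ^ N := by
    have h1 : (D:ℝ) ^ ((1:ℝ)/N) < (M:ℝ)+1 := Nat.lt_floor_add_one _
    have h2 : (D:ℝ) = ((D:ℝ) ^ ((1:ℝ)/N)) ^ N := by
      rw [← Real.rpow_natCast ((D:ℝ) ^ ((1:ℝ)/N)) N, ← Real.rpow_mul (by linarith),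
        one_div, inv_mul_cancel₀ hNne, Real.rpow_one]
    rw [h2]
    exact pow_lt_pow_left₀ h1 (by positivity) hN.ne'
  set d : ℕ := D.toNat with hdnat
  have hdD : (d:ℤ) = D := Int.toNat_of_nonneg (by linarith)
  haveI : NeZero d := ⟨by omega⟩
  have hdlt : d < (M+1)^N := by
    have h3 : (D:ℝ) < (((M+1)^N : ℕ) : ℝ) := by push_cast; exact hlt
    have h4 : D < (((M+1)^N : ℕ) : ℤ) := by exact_mod_cast h3
    omega
  obtain ⟨y, z, hyz, hgyz⟩ := Fintype.exists_ne_map_eq_of_card_lt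
    (fun (y : Fin N → Fin (M+1)) => ((F (fun i => (y i : ℤ)) : ZMod d)))
    (by rw [ZMod.card, Fintype.card_fun, Fintype.card_fin, Fintype.card_fin]; exact hdlt)
  set v : Fin N → ℤ := fun i => (y i : ℤ) - (z i : ℤ) with hv
  have hvne : v ≠ 0 := by
    obtain ⟨i, hi⟩ := Function.ne_iff.mp hyz
    intro h
    apply hi
    have h5 := congrFun h i
    simp only [hv, Pi.zero_apply, sub_eq_zero] at h5
    exact Fin.ext (by exact_mod_cast h5)
  have hFv : F v = F (fun i => (y i : ℤ)) - F (fun i => (z i : ℤ)) := by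
    simp only [hF, hv, sub_mul, Finset.sum_sub_distrib]
    ring
  have hdvd : D ∣ F v := by
    have h0 : ((F v : ℤ) : ZMod d) = 0 := by
      rw [hFv, Int.cast_sub]
      rw [hgyz, sub_self]
    have := (ZMod.intCast_zmod_eq_zero_iff_dvd _ d).mp h0
    rwa [hdD] at this
  obtain ⟨x₁, hx₁⟩ := hmem v hdvd
  have hx₁ne : x₁ ≠ 0 := by
    intro h; apply hvne; rw [← hx₁, h, Matrix.zero_vecMul]
  -- norm bound on v
  have hvbound : ∀ i, v i ^ 2 ≤ (M:ℤ)^2 := by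
    intro i
    have h1 : (y i : ℤ) ≤ M := by exact_mod_cast Nat.le_of_lt_succ (y i).isLt
    have h2 : (z i : ℤ) ≤ M := by exact_mod_cast Nat.le_of_lt_succ (z i).isLt
    have h3 : (0:ℤ) ≤ (y i : ℤ) := by positivity
    have h4 : (0:ℤ) ≤ (z i : ℤ) := by positivity
    simp only [hv]
    nlinarith [h1, h2, h3, h4]
  have hvsum : (∑ j, v j ^ 2) ≤ (N:ℤ) * (M:ℤ)^2 := by
    calc ∑ j, v j ^2 ≤ ∑ _j : Fin N, (M:ℤ)^2 :=
          Finset.sum_le_sum (fun j _ => hvbound j)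
      _ = (N:ℤ) * (M:ℤ)^2 := by
          rw [Finset.sum_const, Finset.card_univ, Fintype.card_fin, nsmul_eq_mul]
  -- the set of squared norms
  have hsq : ∀ x : Fin N → ℤ, (0:ℤ) ≤ ∑ j, (x ᵥ* H) j ^ 2 :=
    fun x => Finset.sum_nonneg (fun j _ => sq_nonneg _)
  set S : Set ℕ := {n | ∃ x : Fin N → ℤ, x ≠ 0 ∧ (n:ℤ) = ∑ j, (x ᵥ* H) j ^ 2} with hS
  have hwit : (∑ j, (x₁ ᵥ* H) j ^ 2).toNat ∈ S :=
    ⟨x₁, hx₁ne, Int.toNat_of_nonneg (hsq x₁)⟩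
  have hSne : S.Nonempty := ⟨_, hwit⟩
  set n₀ : ℕ := sInf S with hn₀
  obtain ⟨x₀, hx₀ne, hx₀eq⟩ : n₀ ∈ S := Nat.sInf_mem hSne
  -- norms as sqrt of integer sums
  have hnorm : ∀ x : Fin N → ℤ, euclNorm (fun j => ((x ᵥ* H) j : ℝ))
      = Real.sqrt (((∑ j, (x ᵥ* H) j ^ 2 : ℤ)) : ℝ) := by
    intro x
    unfold euclNorm
    congr 1
    push_cast
    ring
  set lam : ℝ := Real.sqrt (n₀ : ℝ) with hlam
  have hlam_eq : euclNorm (fun j => ((x₀ ᵥ* H) j : ℝ)) = lam := by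
    rw [hnorm, ← hx₀eq]
    norm_num
    rfl
  have hmemT : lam ∈ {r : ℝ | ∃ x : Fin N → ℤ, x ≠ 0 ∧
      r = euclNorm (fun j => ((x ᵥ* H) j : ℝ))} := ⟨x₀, hx₀ne, hlam_eq.symm⟩
  have hlambda : lambda1Int H = lam := by
    unfold lambda1Int
    apply le_antisymm
    · apply csInf_le _ hmemT
      exact ⟨0, fun r hr => by
        obtain ⟨x, hx, rfl⟩ := hr; exact euclNorm_nonneg _⟩
    · apply le_csInf ⟨lam, hmemT⟩
      rintro r ⟨x, hx, rfl⟩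
      rw [hnorm]
      have hmn : n₀ ≤ (∑ j, (x ᵥ* H) j ^ 2).toNat :=
        Nat.sInf_le ⟨x, hx, Int.toNat_of_nonneg (hsq x)⟩
      apply Real.sqrt_le_sqrt
      have h6 : ((n₀:ℤ):ℝ) ≤ (((∑ j, (x ᵥ* H) j ^ 2).toNat : ℤ):ℝ) := by exact_mod_cast hmn
      rwa [Int.toNat_of_nonneg (hsq x)] at h6
  -- λ₁ ≤ √N · D^(1/N)
  have hlam_nonneg : 0 ≤ lam := Real.sqrt_nonneg _
  have hlam_le : lam ≤ Real.sqrt N * (D:ℝ) ^ ((1:ℝ)/N) := by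
    have h1 : n₀ ≤ (∑ j, (x₁ ᵥ* H) j ^ 2).toNat := Nat.sInf_le hwit
    have h2 : ((n₀:ℤ):ℝ) ≤ ((∑ j, (x₁ ᵥ* H) j ^ 2 : ℤ):ℝ) := by
      rw [← Int.toNat_of_nonneg (hsq x₁)]
      exact_mod_cast h1
    have h3 : ((∑ j, (x₁ ᵥ* H) j ^ 2 : ℤ):ℝ) ≤ (N:ℝ) * (M:ℝ)^2 := by
      rw [hx₁]
      exact_mod_cast hvsum
    have h4 : lam ≤ Real.sqrt ((N:ℝ) * (M:ℝ)^2) := by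
      apply Real.sqrt_le_sqrt
      push_cast at h2 h3 ⊢
      linarith
    calc lam ≤ Real.sqrt ((N:ℝ) * (M:ℝ)^2) := h4
      _ = Real.sqrt N * (M:ℝ) := by
          rw [Real.sqrt_mul (by positivity), Real.sqrt_sq (by positivity)]
      _ ≤ Real.sqrt N * (D:ℝ) ^ ((1:ℝ)/N) := by
          apply mul_le_mul_of_nonneg_left hMle (Real.sqrt_nonneg _)
  -- each coordinate of x₀·H is at most lam
  have hcoord_le : ∀ j, |((x₀ ᵥ* H) j : ℝ)| ≤ lam := by
    intro j
    rw [← hlam_eq]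
    unfold euclNorm
    rw [← Real.sqrt_sq_eq_abs]
    apply Real.sqrt_le_sqrt
    exact Finset.single_le_sum (f := fun j => (((x₀ ᵥ* H) j : ℤ) : ℝ)^2)
      (fun i _ => sq_nonneg _) (Finset.mem_univ j)
  have hxi_le : ∀ i : Fin N, i ≠ lastIdx → |((x₀ i : ℤ):ℝ)| ≤ lam := by
    intro i hi
    have := hcoord_le i
    rwa [hcoord x₀ i hi] at this
  refine ⟨x₀, hx₀ne, ?_, ?_, by rw [hlam_eq, hlambda]⟩
  · intro i hi
    exact le_trans (hxi_le i hi) hlam_le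
  · -- last coordinate bound
    have hid : (x₀ lastIdx) * D
        = (x₀ ᵥ* H) lastIdx - ∑ i ∈ Finset.univ.erase lastIdx, x₀ i * H i lastIdx := by
      rw [hlastc, ← Finset.sum_erase_add _ _ (Finset.mem_univ lastIdx), hDD]
      ring
    have hcard : (Finset.univ.erase lastIdx).card = N - 1 := by
      rw [Finset.card_erase_of_mem (Finset.mem_univ _), Finset.card_univ, Fintype.card_fin]
    have hsum_le : |(((∑ i ∈ Finset.univ.erase lastIdx, x₀ i * H i lastIdx : ℤ)):ℝ)|
        ≤ ((N:ℝ)-1) * (lam * ((D:ℝ)-1)) := by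
      push_cast
      calc |∑ i ∈ Finset.univ.erase lastIdx, ((x₀ i : ℝ) * (H i lastIdx : ℝ))|
          ≤ ∑ i ∈ Finset.univ.erase lastIdx, |(x₀ i : ℝ) * (H i lastIdx : ℝ)| :=
            Finset.abs_sum_le_sum_abs _ _
        _ ≤ ∑ _i ∈ Finset.univ.erase lastIdx, lam * ((D:ℝ)-1) := by
            apply Finset.sum_le_sum
            intro i hi
            have hine : i ≠ lastIdx := Finset.ne_of_mem_erase hi
            obtain ⟨hb0, hbD⟩ := hcol i hine
            have hb0' : (0:ℝ) ≤ (H i lastIdx : ℝ) := by exact_mod_cast hb0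
            have hbD' : (H i lastIdx : ℝ) ≤ (D:ℝ) - 1 := by
              have h : H i lastIdx ≤ D - 1 := by omega
              exact_mod_cast h
            rw [abs_mul, abs_of_nonneg hb0']
            exact mul_le_mul (hxi_le i hine) hbD' hb0' hlam_nonneg
        _ = ((N:ℝ)-1) * (lam * ((D:ℝ)-1)) := by
            rw [Finset.sum_const, hcard, nsmul_eq_mul]
            congr 1
            have : (1:ℕ) ≤ N := hN
            push_cast [Nat.cast_sub this]
            ring
    have hDpos : (0:ℝ) < (D:ℝ) := by linarith
    have hlastabs : |((x₀ lastIdx : ℤ):ℝ)| * (D:ℝ) ≤ lam * ((N:ℝ) * (D:ℝ)) := by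
      have h7 : |((x₀ lastIdx : ℤ):ℝ)| * (D:ℝ) = |(((x₀ lastIdx * D : ℤ)):ℝ)| := by
        push_cast [abs_mul]
        rw [abs_of_pos hDpos]
      rw [h7, hid]
      push_cast
      have h8 := hcoord_le lastIdx
      have h9 : |(((x₀ ᵥ* H) lastIdx : ℤ):ℝ)
          - (((∑ i ∈ Finset.univ.erase lastIdx, x₀ i * H i lastIdx : ℤ)):ℝ)|
          ≤ lam + ((N:ℝ)-1) * (lam * ((D:ℝ)-1)) := by
        calc _ ≤ |(((x₀ ᵥ* H) lastIdx : ℤ):ℝ)|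
              + |(((∑ i ∈ Finset.univ.erase lastIdx, x₀ i * H i lastIdx : ℤ)):ℝ)| :=
              abs_sub _ _
          _ ≤ lam + ((N:ℝ)-1) * (lam * ((D:ℝ)-1)) := add_le_add h8 hsum_le
      push_cast at h9
      have hNR : (1:ℝ) ≤ (N:ℝ) := by exact_mod_cast hN
      nlinarith [h9, hlam_nonneg, hNR, hDR]
    have h10 : |((x₀ lastIdx : ℤ):ℝ)| ≤ lam * (N:ℝ) := by
      have := (mul_le_mul_iff_of_pos_right hDpos).mp (by linarith [hlastabs] :
        |((x₀ lastIdx : ℤ):ℝ)| * (D:ℝ) ≤ (lam * (N:ℝ)) * (D:ℝ))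
      exact this
    have h11 : (N:ℝ) ^ ((3:ℝ)/2) = (N:ℝ) * Real.sqrt N := by
      rw [Real.sqrt_eq_rpow, show (3:ℝ)/2 = 1 + 1/2 by norm_num,
        Real.rpow_add (by exact_mod_cast hN), Real.rpow_one]
    calc |((x₀ lastIdx : ℤ):ℝ)| ≤ lam * (N:ℝ) := h10
      _ ≤ (Real.sqrt N * (D:ℝ) ^ ((1:ℝ)/N)) * (N:ℝ) := by
          apply mul_le_mul_of_nonneg_right hlam_le (by positivity)
      _ = (N:ℝ) ^ ((3:ℝ)/2) * (D:ℝ) ^ ((1:ℝ)/N) := by rw [h11]; ring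
end

section
/- Let H be an optimal Hermite Normal Form row basis of a full-rank integer lattice L ⊆ ℤ^N with D = det(L) ≥ 1, and let k ∈ ℕ satisfy 2^k ≥ N^{3/2} · D^{1/N}. Then there exists a nonzero coefficient vector x ∈ ℤ^N with −2^k ≤ x_i ≤ 2^k for all 1 ≤ i ≤ N, such that ‖x·H‖ = λ₁(L). In particular, such a k can be chosen with k + 1 ≤ ⌈1 + (3/2)·log₂ N + (1/N)·log₂ D⌉, so that N·(k+1) ≤ N·⌈1 + (3/2)·log₂ N + (1/N)·log₂ D⌉ binary-encoded qubits suffice to represent a shortest vector of L. -/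
open Matrix Real Finset

section Aux

variable {N : ℕ}

lemma aux_vecMul_ne (H : Matrix (Fin N) (Fin N) ℤ) (lastIdx : Fin N)
    (hdiag : ∀ i : Fin N, i ≠ lastIdx → H i i = 1)
    (hoff : ∀ i j : Fin N, i ≠ j → j ≠ lastIdx → H i j = 0)
    (x : Fin N → ℤ) (j : Fin N) (hj : j ≠ lastIdx) :
    (x ᵥ* H) j = x j := by
  simp only [Matrix.vecMul, dotProduct]
  rw [Finset.sum_eq_single j]
  · rw [hdiag j hj, mul_one]
  · intro i _ hij; rw [hoff i j hij hj, mul_zero]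
  · intro h; exact absurd (Finset.mem_univ j) h

lemma aux_vecMul_last (H : Matrix (Fin N) (Fin N) ℤ) (lastIdx : Fin N) (x : Fin N → ℤ) :
    (x ᵥ* H) lastIdx
      = (∑ j ∈ Finset.univ.erase lastIdx, x j * H j lastIdx) + x lastIdx * H lastIdx lastIdx := by
  simp only [Matrix.vecMul, dotProduct]
  exact (Finset.sum_erase_add Finset.univ _ (Finset.mem_univ lastIdx)).symm

/-- the linear functional detecting membership in the lattice -/
def auxF (H : Matrix (Fin N) (Fin N) ℤ) (lastIdx : Fin N) (v : Fin N → ℤ) : ℤ :=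
  v lastIdx - ∑ j ∈ Finset.univ.erase lastIdx, v j * H j lastIdx

lemma auxF_sub (H : Matrix (Fin N) (Fin N) ℤ) (lastIdx : Fin N) (v w : Fin N → ℤ) :
    auxF H lastIdx (v - w) = auxF H lastIdx v - auxF H lastIdx w := by
  unfold auxF
  simp only [Pi.sub_apply, sub_mul, Finset.sum_sub_distrib]
  ring

lemma aux_exists_coeff (H : Matrix (Fin N) (Fin N) ℤ) (lastIdx : Fin N)
    (D : ℤ) (hDD : H lastIdx lastIdx = D)
    (hdiag : ∀ i : Fin N, i ≠ lastIdx → H i i = 1)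
    (hoff : ∀ i j : Fin N, i ≠ j → j ≠ lastIdx → H i j = 0)
    (v : Fin N → ℤ) (hv : D ∣ auxF H lastIdx v) :
    ∃ x : Fin N → ℤ, x ᵥ* H = v ∧ (∀ j, j ≠ lastIdx → x j = v j) := by
  refine ⟨Function.update v lastIdx (auxF H lastIdx v / D), ?_, ?_⟩
  · funext j
    by_cases hj : j = lastIdx
    · subst hj
      rw [aux_vecMul_last]
      have h1 : ∀ i ∈ Finset.univ.erase j,
          Function.update v j (auxF H j v / D) i * H i j = v i * H i j := by
        intro i hi
        rw [Function.update_of_ne (Finset.ne_of_mem_erase hi)]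
      rw [Finset.sum_congr rfl h1, Function.update_self, hDD,
        Int.ediv_mul_cancel hv]
      unfold auxF
      ring
    · rw [aux_vecMul_ne H lastIdx hdiag hoff _ j hj, Function.update_of_ne hj]
  · intro j hj; rw [Function.update_of_ne hj]

lemma aux_pigeonhole (H : Matrix (Fin N) (Fin N) ℤ) (lastIdx : Fin N)
    (D : ℤ) (hD : 1 ≤ D) (M : ℕ) (hM : D < ((M : ℤ) + 1) ^ N) :
    ∃ u : Fin N → ℤ, u ≠ 0 ∧ D ∣ auxF H lastIdx u ∧ ∀ i, |u i| ≤ (M : ℤ) := by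
  haveI : NeZero D.toNat := ⟨by omega⟩
  set g : (Fin N → Fin (M + 1)) → ZMod D.toNat :=
    fun v => ((auxF H lastIdx (fun i => ((v i : ℕ) : ℤ))) : ZMod D.toNat) with hg
  have hcard : Fintype.card (ZMod D.toNat) < Fintype.card (Fin N → Fin (M + 1)) := by
    rw [ZMod.card, Fintype.card_fun, Fintype.card_fin, Fintype.card_fin]
    have : (D.toNat : ℤ) < ((M + 1 : ℕ) : ℤ) ^ N := by
      push_cast
      rw [Int.toNat_of_nonneg (by omega)]
      exact_mod_cast hM
    exact_mod_cast this
  obtain ⟨v, w, hvw, hgvw⟩ := Fintype.exists_ne_map_eq_of_card_lt g hcard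
  set v' : Fin N → ℤ := fun i => ((v i : ℕ) : ℤ)
  set w' : Fin N → ℤ := fun i => ((w i : ℕ) : ℤ)
  refine ⟨v' - w', ?_, ?_, ?_⟩
  · intro h
    apply hvw
    funext i
    have := congrFun h i
    simp only [Pi.sub_apply, Pi.zero_apply, sub_eq_zero, v', w'] at this
    have : (v i : ℕ) = (w i : ℕ) := by exact_mod_cast this
    exact Fin.ext this
  · rw [auxF_sub]
    have : ((auxF H lastIdx v' - auxF H lastIdx w' : ℤ) : ZMod D.toNat) = 0 := by
      push_cast
      rw [sub_eq_zero]
      exact hgvw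
    have hdvd : (D.toNat : ℤ) ∣ auxF H lastIdx v' - auxF H lastIdx w' :=
      (ZMod.intCast_zmod_eq_zero_iff_dvd _ _).1 this
    rwa [Int.toNat_of_nonneg (by omega)] at hdvd
  · intro i
    simp only [Pi.sub_apply, v', w']
    have h1 : (v i : ℕ) ≤ M := Nat.lt_succ_iff.1 (v i).isLt
    have h2 : (w i : ℕ) ≤ M := Nat.lt_succ_iff.1 (w i).isLt
    rw [abs_le]
    omega

lemma euclNorm_int (y : Fin N → ℤ) :
    euclNorm (fun j => ((y j : ℤ) : ℝ)) = Real.sqrt ((∑ j, (y j).natAbs ^ 2 : ℕ) : ℝ) := by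
  unfold euclNorm
  congr 1
  push_cast
  refine Finset.sum_congr rfl fun j _ => ?_
  rw [Nat.cast_natAbs]
  push_cast
  rw [sq_abs]

lemma lambda1_least (H : Matrix (Fin N) (Fin N) ℤ)
    (x₁ : Fin N → ℤ) (hx₁ : x₁ ≠ 0) :
    ∃ x₀ : Fin N → ℤ, x₀ ≠ 0 ∧
      euclNorm (fun j => (((x₀ ᵥ* H) j : ℤ) : ℝ)) = lambda1Int H ∧
      (∀ x : Fin N → ℤ, x ≠ 0 →
        (∑ j, ((x₀ ᵥ* H) j).natAbs ^ 2) ≤ ∑ j, ((x ᵥ* H) j).natAbs ^ 2) := by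
  set T : Set ℕ := {n | ∃ x : Fin N → ℤ, x ≠ 0 ∧ n = ∑ j, ((x ᵥ* H) j).natAbs ^ 2} with hT
  have hTne : T.Nonempty := ⟨_, x₁, hx₁, rfl⟩
  obtain ⟨x₀, hx₀, hx₀m⟩ := Nat.sInf_mem hTne
  refine ⟨x₀, hx₀, ?_, ?_⟩
  · have hleast : IsLeast
        {r : ℝ | ∃ x : Fin N → ℤ, x ≠ 0 ∧ r = euclNorm (fun j => ((x ᵥ* H) j : ℝ))}
        (euclNorm (fun j => (((x₀ ᵥ* H) j : ℤ) : ℝ))) := by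
      constructor
      · exact ⟨x₀, hx₀, rfl⟩
      · rintro r ⟨x, hx, rfl⟩
        rw [euclNorm_int, euclNorm_int]
        apply Real.sqrt_le_sqrt
        have : sInf T ≤ ∑ j, ((x ᵥ* H) j).natAbs ^ 2 := Nat.sInf_le ⟨x, hx, rfl⟩
        rw [hx₀m] at this
        exact_mod_cast this
    exact (hleast.csInf_eq).symm
  · intro x hx
    have : sInf T ≤ ∑ j, ((x ᵥ* H) j).natAbs ^ 2 := Nat.sInf_le ⟨x, hx, rfl⟩
    omega

end Aux

/-- for an optimal HNF row basis `H` of a full-rank integer lattice with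
determinant `D ≥ 1` and any `k ∈ ℕ` with `2^k ≥ N^{3/2}·D^{1/N}`, a shortest vector of
the lattice is represented by a nonzero coefficient vector with every coefficient in
`[-2^k, 2^k]`.  Moreover such a `k` can be chosen with
`k + 1 ≤ ⌈1 + (3/2)·log₂ N + (1/N)·log₂ D⌉`, so that
`N·(k+1) ≤ N·⌈1 + (3/2)·log₂ N + (1/N)·log₂ D⌉` binary-encoded qubits suffice. -/
theorem hnf_shortest_vector_binary_qubits (N : ℕ) (hN : 0 < N) (D : ℤ) (hD : 1 ≤ D)
    (H : Matrix (Fin N) (Fin N) ℤ)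
    (lastIdx : Fin N) (hlast : (lastIdx : ℕ) = N - 1)
    (hdet : H.det = D)
    (hdiag : ∀ i : Fin N, i ≠ lastIdx → H i i = 1)
    (hDD : H lastIdx lastIdx = D)
    (hoff : ∀ i j : Fin N, i ≠ j → j ≠ lastIdx → H i j = 0)
    (hcol : ∀ i : Fin N, i ≠ lastIdx → 0 ≤ H i lastIdx ∧ H i lastIdx < D)
    (k : ℕ)
    (hk : (N : ℝ) ^ ((3 : ℝ) / 2) * (D : ℝ) ^ ((1 : ℝ) / N) ≤ (2 : ℝ) ^ k) :
    (∃ x : Fin N → ℤ, x ≠ 0 ∧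
      (∀ i : Fin N, -(2 ^ k : ℤ) ≤ x i ∧ x i ≤ 2 ^ k) ∧
      euclNorm (fun j => ((x ᵥ* H) j : ℝ)) = lambda1Int H) ∧
    (∃ k' : ℕ,
      (N : ℝ) ^ ((3 : ℝ) / 2) * (D : ℝ) ^ ((1 : ℝ) / N) ≤ (2 : ℝ) ^ k' ∧
      (k' + 1 : ℤ) ≤
        ⌈(1 : ℝ) + (3 / 2) * Real.logb 2 N + (1 / N) * Real.logb 2 D⌉ ∧
      (N * (k' + 1) : ℤ) ≤
        N * ⌈(1 : ℝ) + (3 / 2) * Real.logb 2 N + (1 / N) * Real.logb 2 D⌉) := by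
  have hNR : (1 : ℝ) ≤ (N : ℝ) := by exact_mod_cast hN
  have hDR : (1 : ℝ) ≤ (D : ℝ) := by exact_mod_cast hD
  have hNne : (N : ℝ) ≠ 0 := by positivity
  constructor
  · -- Part 1
    -- the box bound M
    set Mr : ℝ := (D : ℝ) ^ ((1 : ℝ) / N) with hMr
    have hMr1 : (1 : ℝ) ≤ Mr := Real.one_le_rpow hDR (by positivity)
    have hMr0 : (0 : ℝ) ≤ Mr := by linarith
    set M : ℕ := ⌊Mr⌋₊ with hM
    have hMle : (M : ℝ) ≤ Mr := Nat.floor_le hMr0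
    have hMlt : Mr < (M : ℝ) + 1 := Nat.lt_floor_add_one Mr
    have hMpow : (D : ℤ) < ((M : ℤ) + 1) ^ N := by
      have h1 : (D : ℝ) < ((M : ℝ) + 1) ^ N := by
        have h2 : Mr ^ N = (D : ℝ) := by
          rw [hMr, ← Real.rpow_natCast ((D:ℝ) ^ ((1:ℝ)/N)) N, ← Real.rpow_mul (by linarith)]
          rw [one_div, inv_mul_cancel₀ hNne, Real.rpow_one]
        calc (D : ℝ) = Mr ^ N := h2.symm
          _ < ((M : ℝ) + 1) ^ N := by
              apply pow_lt_pow_left₀ hMlt hMr0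
              omega
      exact_mod_cast h1
    obtain ⟨u, hu0, huD, hub⟩ := aux_pigeonhole H lastIdx D hD M hMpow
    obtain ⟨xu, hxuH, _⟩ := aux_exists_coeff H lastIdx D hDD hdiag hoff u huD
    have hxu0 : xu ≠ 0 := by
      intro h
      rw [h] at hxuH
      rw [Matrix.zero_vecMul] at hxuH
      exact hu0 hxuH.symm
    obtain ⟨x₀, hx₀0, hx₀norm, hx₀min⟩ := lambda1_least H xu hxu0
    set v : Fin N → ℤ := x₀ ᵥ* H with hv
    set m : ℕ := ∑ j, (v j).natAbs ^ 2 with hmdef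
    -- bound on m
    have hmb : m ≤ N * M ^ 2 := by
      have h1 : m ≤ ∑ j, ((xu ᵥ* H) j).natAbs ^ 2 := hx₀min xu hxu0
      rw [hxuH] at h1
      refine h1.trans ?_
      have h2 : ∀ j ∈ Finset.univ, (u j).natAbs ^ 2 ≤ M ^ 2 := by
        intro j _
        have := hub j
        have h3 : (u j).natAbs ≤ M := by rw [abs_le] at this; omega
        exact Nat.pow_le_pow_left h3 2
      calc ∑ j, (u j).natAbs ^ 2 ≤ ∑ _j : Fin N, M ^ 2 := Finset.sum_le_sum h2
        _ = N * M ^ 2 := by rw [Finset.sum_const, Finset.card_univ, Fintype.card_fin, smul_eq_mul]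
    -- componentwise bound on v
    have hcomp : ∀ j, ((v j).natAbs : ℝ) ≤ Real.sqrt N * M := by
      intro j
      have h1 : (v j).natAbs ^ 2 ≤ m := by
        refine Finset.single_le_sum (f := fun j => (v j).natAbs ^ 2) (fun i _ => Nat.zero_le _)
          (Finset.mem_univ j)
      have h2 : (v j).natAbs ^ 2 ≤ N * M ^ 2 := h1.trans hmb
      have h3 : (((v j).natAbs : ℝ)) ^ 2 ≤ (N : ℝ) * (M : ℝ) ^ 2 := by exact_mod_cast h2
      have h4 : ((v j).natAbs : ℝ) = Real.sqrt (((v j).natAbs : ℝ) ^ 2) :=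
        (Real.sqrt_sq (by positivity)).symm
      rw [h4]
      have h5 : Real.sqrt ((N : ℝ) * (M : ℝ) ^ 2) = Real.sqrt N * M := by
        rw [Real.sqrt_mul (by positivity), Real.sqrt_sq (by positivity)]
      rw [← h5]
      exact Real.sqrt_le_sqrt h3
    -- the global coefficient bound
    have hbig : Real.sqrt N * M * N ≤ (2 : ℝ) ^ k := by
      have h32 : (N : ℝ) ^ ((3 : ℝ) / 2) = (N : ℝ) * Real.sqrt N := by
        rw [Real.sqrt_eq_rpow]
        rw [← Real.rpow_one_add' (by positivity) (by norm_num)]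
        norm_num
      have h1 : Real.sqrt N * M * N ≤ (N : ℝ) ^ ((3:ℝ)/2) * Mr := by
        rw [h32]
        have hs : (0:ℝ) ≤ Real.sqrt N := Real.sqrt_nonneg _
        calc Real.sqrt N * M * N = (N : ℝ) * Real.sqrt N * M := by ring
          _ ≤ (N : ℝ) * Real.sqrt N * Mr := by
              apply mul_le_mul_of_nonneg_left hMle (by positivity)
      exact h1.trans hk
    have hxb : ∀ i, ((x₀ i).natAbs : ℝ) ≤ (2 : ℝ) ^ k := by
      intro i
      by_cases hi : i = lastIdx
      · -- last coefficient
        subst hi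
        have heq : x₀ i * D = v i - ∑ j ∈ Finset.univ.erase i, x₀ j * H j i := by
          rw [hv, aux_vecMul_last H i x₀, hDD]
          ring
        have hDR0 : (0 : ℝ) < (D : ℝ) := by linarith
        have hC : (0:ℝ) ≤ Real.sqrt N * M := by positivity
        set C : ℝ := Real.sqrt N * M * D with hCdef
        have hC0 : (0:ℝ) ≤ C := by positivity
        have hterm : ∀ j ∈ Finset.univ.erase i, |(x₀ j : ℝ) * ((H j i : ℤ) : ℝ)| ≤ C := by
          intro j hj
          have hjne : j ≠ i := Finset.ne_of_mem_erase hj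
          have hx : ((x₀ j).natAbs : ℝ) ≤ Real.sqrt N * M := by
            have := hcomp j
            rwa [hv, aux_vecMul_ne H i hdiag hoff x₀ j hjne] at this
          have h1 : |(x₀ j : ℝ)| ≤ Real.sqrt N * M := by
            rwa [Nat.cast_natAbs, Int.cast_abs] at hx
          have hb0 := (hcol j hjne).1
          have hb1 := (hcol j hjne).2
          have h2 : |((H j i : ℤ) : ℝ)| ≤ (D : ℝ) := by
            rw [← Int.cast_abs]
            have h3 : |H j i| ≤ D := by rw [abs_of_nonneg hb0]; omega
            exact_mod_cast h3
          rw [abs_mul, hCdef]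
          exact mul_le_mul h1 h2 (abs_nonneg _) hC
        have hvlast : |((v i : ℤ) : ℝ)| ≤ C := by
          have h1 : |((v i : ℤ) : ℝ)| ≤ Real.sqrt N * M := by
            have := hcomp i
            rwa [Nat.cast_natAbs, Int.cast_abs] at this
          have h2 : Real.sqrt N * M * 1 ≤ Real.sqrt N * M * D :=
            mul_le_mul_of_nonneg_left hDR hC
          rw [hCdef]
          nlinarith
        have hsum : ∑ j ∈ Finset.univ.erase i, |(x₀ j : ℝ) * ((H j i : ℤ) : ℝ)|
            ≤ ((N : ℝ) - 1) * C := by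
          have h1 := Finset.sum_le_sum hterm
          have h2 : ∑ _j ∈ Finset.univ.erase i, C = ((Finset.univ.erase i).card : ℝ) * C := by
            rw [Finset.sum_const, nsmul_eq_mul]
          have hcard : ((Finset.univ.erase i).card : ℝ) = (N : ℝ) - 1 := by
            rw [Finset.card_erase_of_mem (Finset.mem_univ i), Finset.card_univ,
              Fintype.card_fin]
            push_cast [Nat.cast_sub hN]
            ring
          rw [h2, hcard] at h1
          exact h1
        have habs2 : |((x₀ i * D : ℤ) : ℝ)| ≤ (N : ℝ) * C := by
          rw [heq]
          push_cast
          have h4 := Finset.abs_sum_le_sum_abs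
            (fun j => (x₀ j : ℝ) * ((H j i : ℤ) : ℝ)) (Finset.univ.erase i)
          have h5 := abs_sub ((v i : ℤ) : ℝ)
            (∑ j ∈ Finset.univ.erase i, (x₀ j : ℝ) * ((H j i : ℤ) : ℝ))
          have h6 : |∑ j ∈ Finset.univ.erase i, (x₀ j : ℝ) * ((H j i : ℤ) : ℝ)|
              ≤ ((N : ℝ) - 1) * C := le_trans h4 hsum
          calc |((v i : ℝ)) - ∑ j ∈ Finset.univ.erase i, (x₀ j : ℝ) * ((H j i : ℤ) : ℝ)|
              ≤ C + ((N : ℝ) - 1) * C := by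
                linarith [hvlast]
            _ = (N : ℝ) * C := by ring
        have habs : ((x₀ i).natAbs : ℝ) * (D : ℝ) = |((x₀ i * D : ℤ) : ℝ)| := by
          rw [Nat.cast_natAbs, Int.cast_abs]
          push_cast
          rw [abs_mul, abs_of_pos hDR0]
        have hfin : ((x₀ i).natAbs : ℝ) * (D : ℝ) ≤ ((2:ℝ) ^ k) * D := by
          rw [habs]
          refine habs2.trans ?_
          have h7 : (N : ℝ) * C = (Real.sqrt N * M * N) * D := by rw [hCdef]; ring
          rw [h7]
          exact mul_le_mul_of_nonneg_right hbig (le_of_lt hDR0)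
        have := (mul_le_mul_iff_of_pos_right hDR0).1 hfin
        exact this
      · -- other coefficients
        have hx : ((x₀ i).natAbs : ℝ) ≤ Real.sqrt N * M := by
          have := hcomp i
          rwa [hv, aux_vecMul_ne H lastIdx hdiag hoff x₀ i hi] at this
        refine hx.trans ?_
        calc Real.sqrt N * M = Real.sqrt N * M * 1 := by ring
          _ ≤ Real.sqrt N * M * N := by
              apply mul_le_mul_of_nonneg_left hNR (by positivity)
          _ ≤ (2:ℝ) ^ k := hbig
    refine ⟨x₀, hx₀0, ?_, hx₀norm⟩
    intro i
    have h2 : (x₀ i).natAbs ≤ 2 ^ k := by exact_mod_cast hxb i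
    have h3 : ((x₀ i).natAbs : ℤ) ≤ (2:ℤ) ^ k := by exact_mod_cast h2
    constructor <;> omega
  · -- Part 2
    set c : ℝ := (3 / 2) * Real.logb 2 N + (1 / N) * Real.logb 2 D with hc
    have hc0 : 0 ≤ c := by
      have h1 : 0 ≤ Real.logb 2 N := Real.logb_nonneg one_lt_two hNR
      have h2 : 0 ≤ Real.logb 2 D := Real.logb_nonneg one_lt_two hDR
      positivity
    have key : (N : ℝ) ^ ((3 : ℝ) / 2) * (D : ℝ) ^ ((1 : ℝ) / N) = (2 : ℝ) ^ c := by
      rw [hc, Real.rpow_add two_pos]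
      congr 1
      · rw [mul_comm, Real.rpow_mul (by norm_num),
          Real.rpow_logb two_pos (by norm_num) (by linarith)]
      · rw [mul_comm, Real.rpow_mul (by norm_num),
          Real.rpow_logb two_pos (by norm_num) (by linarith)]
    have h2' : ((⌈c⌉₊ : ℤ)) = ⌈c⌉ := by
      rw [← Int.ceil_toNat c, Int.toNat_of_nonneg (Int.ceil_nonneg hc0)]
    have h1' : ⌈(1:ℝ) + c⌉ = ⌈c⌉ + 1 := by rw [add_comm, Int.ceil_add_one]
    have h3' : (1:ℝ) + (3 / 2) * Real.logb 2 N + (1 / N) * Real.logb 2 D = 1 + c := by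
      rw [hc]; ring
    refine ⟨⌈c⌉₊, ?_, ?_, ?_⟩
    · rw [key]
      calc (2:ℝ) ^ c ≤ (2:ℝ) ^ ((⌈c⌉₊ : ℕ) : ℝ) :=
            Real.rpow_le_rpow_of_exponent_le one_le_two (Nat.le_ceil c)
        _ = (2:ℝ) ^ (⌈c⌉₊ : ℕ) := Real.rpow_natCast 2 _
    · rw [h3', h1', h2']
    · rw [h3', h1', h2']
end

section
/- Let H be an optimal Hermite Normal Form row basis of a full-rank integer lattice L ⊆ ℤ^N with D = det(L) ≥ 1, and let m be an even natural number with m ≥ 2·N^{3/2}·D^{1/N}. Then there exists a spin configuration s ∈ ({−1, 1}^m)^N such that the coefficient vector x ∈ ℤ^N defined by x_j = (1/2)·Σ_{p=1}^{m} s_{p,j} (the shifted Hamming weight of the j-th column) is nonzero and satisfies ‖x·H‖ = λ₁(L); i.e., N Hamming-weight-encoded qudits of m qubits each, a system of N·m qubits, suffice to represent a shortest vector of L. -/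
open Matrix Real Finset

theorem aux_pigeon (N : ℕ) (hN : 0 < N) (D : ℤ) (hD : 1 ≤ D) (b : Fin N → ℤ) :
    ∃ v : Fin N → ℤ, v ≠ 0 ∧ (∀ i, |v i| ≤ ⌊(D:ℝ) ^ ((1:ℝ)/N)⌋₊) ∧
      (D ∣ ∑ i, v i * b i) := by
  set t : ℕ := ⌊(D:ℝ) ^ ((1:ℝ)/N)⌋₊ with ht
  set d : ℕ := D.toNat with hdd
  have hd0 : 0 < d := by omega
  have hDd : (d : ℤ) = D := Int.toNat_of_nonneg (by omega)
  haveI : NeZero d := ⟨hd0.ne'⟩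
  have hrpow : ((D:ℝ) ^ ((1:ℝ)/N)) ^ (N:ℕ) = (D:ℝ) := by
    rw [← Real.rpow_natCast ((D:ℝ) ^ ((1:ℝ)/N)) N, ← Real.rpow_mul (by positivity)]
    rw [one_div, inv_mul_cancel₀ (by exact_mod_cast hN.ne'), Real.rpow_one]
  have hcard : d < (t+1)^N := by
    have h1 : (D:ℝ) ^ ((1:ℝ)/N) < t + 1 := Nat.lt_floor_add_one _
    have h2 : (D:ℝ) < ((t+1:ℕ):ℝ)^(N:ℕ) := by
      calc (D:ℝ) = ((D:ℝ) ^ ((1:ℝ)/N)) ^ (N:ℕ) := hrpow.symm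
        _ < ((t+1:ℕ):ℝ)^(N:ℕ) := by
            apply pow_lt_pow_left₀ _ (by positivity) hN.ne'
            push_cast; exact h1
    have := hDd ▸ h2
    exact_mod_cast (by exact_mod_cast this : ((d:ℝ)) < ((t+1)^N : ℕ))
  have hcard' : Fintype.card (ZMod d) < Fintype.card (Fin N → Fin (t+1)) := by
    simp [ZMod.card, hcard]
  obtain ⟨a, a', hne, heq⟩ := Fintype.exists_ne_map_eq_of_card_lt
    (fun a : Fin N → Fin (t+1) => ((∑ i, (a i : ℤ) * b i : ℤ) : ZMod d)) hcard'
  refine ⟨fun i => (a i : ℤ) - (a' i : ℤ), ?_, ?_, ?_⟩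
  · intro h0
    apply hne; funext i
    have := congrFun h0 i
    simp only [Pi.zero_apply, sub_eq_zero] at this
    exact Fin.ext (by exact_mod_cast this)
  · intro i
    have h1 : (a i : ℤ) ≤ t := by have := (a i).isLt; omega
    have h2 : (a' i : ℤ) ≤ t := by have := (a' i).isLt; omega
    have h3 : (0:ℤ) ≤ a i := by positivity
    have h4 : (0:ℤ) ≤ a' i := by positivity
    rw [abs_sub_le_iff]; omega
  · have : ((∑ i, ((a i : ℤ) - (a' i : ℤ)) * b i : ℤ) : ZMod d) = 0 := by
      push_cast
      simp only [sub_mul, Finset.sum_sub_distrib]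
      rw [sub_eq_zero]
      exact_mod_cast heq
    rw [← hDd]
    exact_mod_cast (ZMod.intCast_zmod_eq_zero_iff_dvd _ d).mp this

theorem aux_exists_min (N : ℕ) (hN : 0 < N) (H : Matrix (Fin N) (Fin N) ℤ) :
    ∃ x : Fin N → ℤ, x ≠ 0 ∧ euclNorm (fun j => ((x ᵥ* H) j : ℝ)) = lambda1Int H := by
  classical
  set q : (Fin N → ℤ) → ℕ := fun x => (∑ j, ((x ᵥ* H) j)^2).toNat with hq
  have hnorm : ∀ x : Fin N → ℤ, euclNorm (fun j => ((x ᵥ* H) j : ℝ)) = Real.sqrt (q x) := by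
    intro x
    have h0 : (0:ℤ) ≤ ∑ j, ((x ᵥ* H) j)^2 := Finset.sum_nonneg fun j _ => sq_nonneg _
    rw [euclNorm]
    congr 1
    rw [hq]
    rw [show (((∑ j, ((x ᵥ* H) j)^2).toNat : ℕ) : ℝ) = ((((∑ j, ((x ᵥ* H) j)^2).toNat : ℤ)) : ℝ) by push_cast; ring,
      Int.toNat_of_nonneg h0]
    push_cast
    ring
  set T : Set ℕ := {n | ∃ x : Fin N → ℤ, x ≠ 0 ∧ n = q x} with hT
  have hTne : T.Nonempty := by
    refine ⟨q (fun _ => 1), fun _ => 1, ?_, rfl⟩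
    intro h
    have := congrFun h ⟨0, hN⟩
    simp at this
  obtain ⟨x, hx0, hxq⟩ : ∃ x : Fin N → ℤ, x ≠ 0 ∧ sInf T = q x := Nat.sInf_mem hTne
  refine ⟨x, hx0, ?_⟩
  apply le_antisymm
  · apply le_csInf
    · exact ⟨_, x, hx0, rfl⟩
    · rintro r ⟨y, hy0, rfl⟩
      rw [hnorm, hnorm]
      apply Real.sqrt_le_sqrt
      have : sInf T ≤ q y := Nat.sInf_le ⟨y, hy0, rfl⟩
      rw [hxq] at this
      exact_mod_cast this
  · apply csInf_le
    · exact ⟨0, by rintro r ⟨y, _, rfl⟩; rw [hnorm]; positivity⟩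
    · exact ⟨x, hx0, rfl⟩

theorem aux_spin (m : ℕ) (hm : Even m) (x : ℤ) (hx : 2 * |x| ≤ m) :
    ∃ s : Fin m → ℤ, (∀ p, s p = 1 ∨ s p = -1) ∧ 2 * x = ∑ p, s p := by
  classical
  obtain ⟨k, hk⟩ := hm
  have habs1 := neg_abs_le x
  have habs2 := le_abs_self x
  have h1 : 0 ≤ (k:ℤ) + x := by omega
  have h2 : (k:ℤ) + x ≤ m := by omega
  set c : ℕ := ((k:ℤ) + x).toNat with hc
  have hcm : c ≤ m := by omega
  refine ⟨fun p => if (p:ℕ) < c then 1 else -1, fun p => by by_cases h : (p:ℕ) < c <;> simp [h], ?_⟩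
  rw [Fin.sum_univ_eq_sum_range (fun i => if i < c then (1:ℤ) else -1)]
  have hfil : (range m).filter (fun i => i < c) = range c := by
    ext i; simp; omega
  rw [Finset.sum_ite, hfil, Finset.sum_const, Finset.sum_const,
    Finset.filter_not, Finset.card_sdiff_of_subset (Finset.filter_subset _ _),
    hfil, Finset.card_range, Finset.card_range]
  simp only [nsmul_eq_mul]
  have : ((c:ℤ)) = (k:ℤ) + x := by omega
  have hmc : ((m - c : ℕ) : ℤ) = (m:ℤ) - c := by omega
  rw [hmc]
  omega

/-- for an optimal HNF row basis `H` of a full-rank integer lattice with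
determinant `D ≥ 1`, and any even `m` with `m ≥ 2·N^{3/2}·D^{1/N}`, there is a spin
configuration `s ∈ ({-1,1}^m)^N` whose Hamming-weight-encoded coefficient vector
`x j = (1/2)·∑_p s j p` is nonzero and represents a shortest vector of the lattice;
i.e. `N` Hamming qudits of `m` qubits each (a system of `N·m` qubits) suffice. -/
theorem hnf_shortest_vector_hamming_qubits (N : ℕ) (hN : 0 < N) (D : ℤ) (hD : 1 ≤ D)
    (H : Matrix (Fin N) (Fin N) ℤ)
    (lastIdx : Fin N) (hlast : (lastIdx : ℕ) = N - 1)
    (hdet : H.det = D)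
    (hdiag : ∀ i : Fin N, i ≠ lastIdx → H i i = 1)
    (hDD : H lastIdx lastIdx = D)
    (hoff : ∀ i j : Fin N, i ≠ j → j ≠ lastIdx → H i j = 0)
    (hcol : ∀ i : Fin N, i ≠ lastIdx → 0 ≤ H i lastIdx ∧ H i lastIdx < D)
    (m : ℕ) (hm : Even m)
    (hmsize : 2 * (N : ℝ) ^ ((3 : ℝ) / 2) * (D : ℝ) ^ ((1 : ℝ) / N) ≤ (m : ℝ)) :
    ∃ (s : Fin N → Fin m → ℤ) (x : Fin N → ℤ),
      (∀ j p, s j p = 1 ∨ s j p = -1) ∧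
      (∀ j, 2 * x j = ∑ p, s j p) ∧
      x ≠ 0 ∧
      euclNorm (fun j => ((x ᵥ* H) j : ℝ)) = lambda1Int H := by
  classical
  have hN' : (0:ℝ) < N := by exact_mod_cast hN
  have hN1 : (1:ℝ) ≤ (N:ℝ) := by exact_mod_cast hN
  have hD' : (1:ℝ) ≤ D := by exact_mod_cast hD
  have hD0 : (0:ℝ) < D := by linarith
  set t : ℕ := ⌊(D:ℝ) ^ ((1:ℝ)/N)⌋₊ with ht
  -- vecMul formulas
  have hvm1 : ∀ (x : Fin N → ℤ) (j : Fin N), j ≠ lastIdx → (x ᵥ* H) j = x j := by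
    intro x j hj
    rw [vecMul, dotProduct, Finset.sum_eq_single j]
    · rw [hdiag j hj]; ring
    · intro i _ hij; rw [hoff i j hij hj]; ring
    · intro h; exact absurd (mem_univ j) h
  have hvm2 : ∀ x : Fin N → ℤ,
      (x ᵥ* H) lastIdx = (∑ i ∈ univ.erase lastIdx, x i * H i lastIdx) + x lastIdx * D := by
    intro x
    rw [vecMul, dotProduct, ← Finset.sum_erase_add _ _ (mem_univ lastIdx), hDD]
  -- pigeonhole: short lattice vector
  obtain ⟨v, hv0, hvbd, hvdvd⟩ :=
    aux_pigeon N hN D hD (fun i => if i = lastIdx then 1 else -(H i lastIdx))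
  have hvdvd' : D ∣ v lastIdx - ∑ i ∈ univ.erase lastIdx, v i * H i lastIdx := by
    have hsplit : ∑ i, v i * (if i = lastIdx then 1 else -(H i lastIdx))
        = (∑ i ∈ univ.erase lastIdx, v i * (if i = lastIdx then 1 else -(H i lastIdx)))
          + v lastIdx * (if lastIdx = lastIdx then 1 else -(H lastIdx lastIdx)) :=
      (Finset.sum_erase_add _ _ (mem_univ lastIdx)).symm
    have h2 : ∑ i ∈ univ.erase lastIdx, v i * (if i = lastIdx then 1 else -(H i lastIdx))
        = - ∑ i ∈ univ.erase lastIdx, v i * H i lastIdx := by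
      rw [← Finset.sum_neg_distrib]
      apply Finset.sum_congr rfl
      intro i hi
      rw [if_neg (Finset.ne_of_mem_erase hi)]; ring
    have h4 : (if lastIdx = lastIdx then (1:ℤ) else -(H lastIdx lastIdx)) = 1 := if_pos rfl
    have hthis := hvdvd
    rw [hsplit, h2, h4, mul_one] at hthis
    convert hthis using 1
    ring
  obtain ⟨qq, hqq⟩ := hvdvd'
  set y : Fin N → ℤ := fun i => if i = lastIdx then qq else v i with hy
  have hyl : y lastIdx = qq := if_pos rfl
  have hyi : ∀ i : Fin N, i ≠ lastIdx → y i = v i := fun i hi => if_neg hi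
  have hyH : y ᵥ* H = v := by
    funext j
    by_cases hj : j = lastIdx
    · rw [hj, hvm2 y]
      have hsum : ∑ i ∈ univ.erase lastIdx, y i * H i lastIdx
          = ∑ i ∈ univ.erase lastIdx, v i * H i lastIdx := by
        apply Finset.sum_congr rfl
        intro i hi
        rw [hyi i (Finset.ne_of_mem_erase hi)]
      rw [hsum, hyl]
      linarith [hqq]
    · rw [hvm1 y j hj, hyi j hj]
  have hy0 : y ≠ 0 := by
    intro h
    apply hv0
    rw [← hyH, h]
    funext j
    simp [vecMul, dotProduct]
  -- lambda1 bounds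
  set S : Set ℝ := {r : ℝ | ∃ x : Fin N → ℤ, x ≠ 0 ∧ r = euclNorm (fun j => ((x ᵥ* H) j : ℝ))}
    with hS
  have hbdd : BddBelow S := by
    refine ⟨0, ?_⟩
    rintro r ⟨z, _, rfl⟩
    exact Real.sqrt_nonneg _
  have hlam_le : lambda1Int H ≤ Real.sqrt N * (D:ℝ) ^ ((1:ℝ)/N) := by
    have hmem : euclNorm (fun j => ((y ᵥ* H) j : ℝ)) ∈ S := ⟨y, hy0, rfl⟩
    have h1 : lambda1Int H ≤ euclNorm (fun j => ((y ᵥ* H) j : ℝ)) := csInf_le hbdd hmem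
    have h2 : euclNorm (fun j => ((y ᵥ* H) j : ℝ)) ≤ Real.sqrt N * (D:ℝ) ^ ((1:ℝ)/N) := by
      rw [euclNorm]
      have hsum : ∑ i, (((y ᵥ* H) i : ℝ))^2 ≤ (N:ℝ) * ((t:ℝ))^2 := by
        calc ∑ i, (((y ᵥ* H) i : ℝ))^2 ≤ ∑ _i : Fin N, ((t:ℝ))^2 := by
              apply Finset.sum_le_sum
              intro i _
              rw [hyH]
              have hb := hvbd i
              have h0 : (v i)^2 ≤ ((t:ℤ))^2 := by
                nlinarith [neg_abs_le (v i), le_abs_self (v i), abs_nonneg (v i)]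
              exact_mod_cast h0
          _ = (N:ℝ) * ((t:ℝ))^2 := by rw [Finset.sum_const, Finset.card_univ]; simp [mul_comm]
      calc Real.sqrt (∑ i, (((y ᵥ* H) i : ℝ))^2) ≤ Real.sqrt ((N:ℝ) * ((t:ℝ))^2) :=
            Real.sqrt_le_sqrt hsum
        _ = Real.sqrt N * (t:ℝ) := by
            rw [Real.sqrt_mul (le_of_lt hN'), Real.sqrt_sq (by positivity)]
        _ ≤ Real.sqrt N * (D:ℝ) ^ ((1:ℝ)/N) := by
            apply mul_le_mul_of_nonneg_left _ (Real.sqrt_nonneg _)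
            exact Nat.floor_le (by positivity)
    linarith
  obtain ⟨x, hx0, hxmin⟩ := aux_exists_min N hN H
  obtain ⟨lam, hxmin', hlamdef⟩ :
      ∃ lam : ℝ, euclNorm (fun j => ((x ᵥ* H) j : ℝ)) = lam ∧ lambda1Int H = lam :=
    ⟨_, hxmin, rfl⟩
  rw [hlamdef] at hlam_le
  have hlam_nonneg : 0 ≤ lam := by
    rw [← hxmin']
    exact Real.sqrt_nonneg _
  -- coordinate-wise bounds on the minimizing image vector
  have hw : ∀ j, (|(x ᵥ* H) j| : ℝ) ≤ lam := by
    intro j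
    rw [← hxmin', euclNorm, ← Real.sqrt_sq_eq_abs]
    apply Real.sqrt_le_sqrt
    exact Finset.single_le_sum (f := fun i => (((x ᵥ* H) i : ℤ) : ℝ)^2)
      (fun i _ => sq_nonneg _) (mem_univ j)
  have hxcoord : ∀ j, (|x j| : ℝ) ≤ (N:ℝ) * lam := by
    intro j
    by_cases hj : j = lastIdx
    · rw [hj]
      -- x lastIdx * D = w lastIdx - ∑_{i ≠ last} w i * b i
      have hkey : x lastIdx * D
          = (x ᵥ* H) lastIdx - ∑ i ∈ univ.erase lastIdx, (x ᵥ* H) i * H i lastIdx := by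
        rw [hvm2 x]
        have hsum : ∑ i ∈ univ.erase lastIdx, (x ᵥ* H) i * H i lastIdx
            = ∑ i ∈ univ.erase lastIdx, x i * H i lastIdx := by
          apply Finset.sum_congr rfl
          intro i hi
          rw [hvm1 x i (Finset.ne_of_mem_erase hi)]
        rw [hsum]; ring
      have habs : (|x lastIdx| : ℝ) * (D:ℝ) ≤ lam + (N:ℝ) * (lam * ((D:ℝ) - 1)) := by
        have hkeyR : ((x lastIdx : ℤ) : ℝ) * ((D : ℤ) : ℝ)
            = (((x ᵥ* H) lastIdx : ℤ) : ℝ) - ∑ i ∈ univ.erase lastIdx,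
                (((x ᵥ* H) i : ℤ) : ℝ) * ((H i lastIdx : ℤ) : ℝ) := by
          exact_mod_cast congrArg (fun z : ℤ => (z : ℝ)) hkey
        have h1 : (|x lastIdx * D| : ℝ)
            ≤ (|(x ᵥ* H) lastIdx| : ℝ) + ∑ i ∈ univ.erase lastIdx,
                (|(x ᵥ* H) i| : ℝ) * ((H i lastIdx : ℤ) : ℝ) := by
          rw [hkeyR]
          calc |((x ᵥ* H) lastIdx : ℝ) - ∑ i ∈ univ.erase lastIdx,
                  ((x ᵥ* H) i : ℝ) * ((H i lastIdx : ℤ) : ℝ)|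
              ≤ |((x ᵥ* H) lastIdx : ℝ)| + |∑ i ∈ univ.erase lastIdx,
                  ((x ᵥ* H) i : ℝ) * ((H i lastIdx : ℤ) : ℝ)| := abs_sub _ _
            _ ≤ |((x ᵥ* H) lastIdx : ℝ)| + ∑ i ∈ univ.erase lastIdx,
                  |((x ᵥ* H) i : ℝ)| * ((H i lastIdx : ℤ) : ℝ) := by
                gcongr
                calc |∑ i ∈ univ.erase lastIdx, ((x ᵥ* H) i : ℝ) * ((H i lastIdx : ℤ) : ℝ)|
                    ≤ ∑ i ∈ univ.erase lastIdx, |((x ᵥ* H) i : ℝ) * ((H i lastIdx : ℤ) : ℝ)| :=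
                      Finset.abs_sum_le_sum_abs _ _
                  _ = ∑ i ∈ univ.erase lastIdx, |((x ᵥ* H) i : ℝ)| * ((H i lastIdx : ℤ) : ℝ) := by
                      apply Finset.sum_congr rfl
                      intro i hi
                      rw [abs_mul, abs_of_nonneg (show (0:ℝ) ≤ ((H i lastIdx : ℤ) : ℝ) by
                        exact_mod_cast (hcol i (Finset.ne_of_mem_erase hi)).1)]
        have h2 : ∑ i ∈ univ.erase lastIdx, (|(x ᵥ* H) i| : ℝ) * ((H i lastIdx : ℤ) : ℝ)
            ≤ (N:ℝ) * (lam * ((D:ℝ) - 1)) := by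
          have hmul : (0:ℝ) ≤ lam * ((D:ℝ) - 1) := by
            apply mul_nonneg hlam_nonneg; linarith
          calc ∑ i ∈ univ.erase lastIdx, (|(x ᵥ* H) i| : ℝ) * ((H i lastIdx : ℤ) : ℝ)
              ≤ ∑ _i ∈ univ.erase lastIdx, lam * ((D:ℝ) - 1) := by
                apply Finset.sum_le_sum
                intro i hi
                have hb1 : (0:ℝ) ≤ ((H i lastIdx : ℤ) : ℝ) := by
                  exact_mod_cast (hcol i (Finset.ne_of_mem_erase hi)).1
                have hb2 : ((H i lastIdx : ℤ) : ℝ) ≤ (D:ℝ) - 1 := by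
                  have hlt := (hcol i (Finset.ne_of_mem_erase hi)).2
                  have hle : H i lastIdx ≤ D - 1 := by omega
                  have : ((H i lastIdx : ℤ) : ℝ) ≤ ((D - 1 : ℤ) : ℝ) := by exact_mod_cast hle
                  push_cast at this
                  linarith
                have hwi := hw i
                have hwnn : (0:ℝ) ≤ (|(x ᵥ* H) i| : ℝ) := by positivity
                nlinarith
            _ ≤ (N:ℝ) * (lam * ((D:ℝ) - 1)) := by
                rw [Finset.sum_const, nsmul_eq_mul]
                have hcard : ((univ.erase lastIdx).card : ℝ) ≤ (N:ℝ) := by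
                  rw [Finset.card_erase_of_mem (mem_univ lastIdx), Finset.card_univ,
                    Fintype.card_fin]
                  exact_mod_cast (Nat.sub_le N 1)
                exact mul_le_mul_of_nonneg_right hcard hmul
        have h3 : (|x lastIdx * D| : ℝ) = (|x lastIdx| : ℝ) * (D:ℝ) := by
          push_cast
          rw [abs_mul, abs_of_nonneg (le_of_lt hD0)]
        rw [h3] at h1
        have hwl := hw lastIdx
        linarith
      -- divide by D
      have hfinal : (|x lastIdx| : ℝ) * (D:ℝ) ≤ ((N:ℝ) * lam) * (D:ℝ) := by
        have hstep : lam + (N:ℝ) * (lam * ((D:ℝ) - 1)) ≤ ((N:ℝ) * lam) * (D:ℝ) := by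
          nlinarith
        linarith
      exact le_of_mul_le_mul_right hfinal hD0
    · have h := hw j
      rw [hvm1 x j hj] at h
      nlinarith
  -- coefficients fit in the Hamming encoding
  have hfin : ∀ j, 2 * |x j| ≤ (m:ℤ) := by
    intro j
    have h32 : (N:ℝ) ^ ((3:ℝ)/2) = (N:ℝ) * Real.sqrt N := by
      rw [show (3:ℝ)/2 = 1 + 1/2 by norm_num, Real.rpow_add hN', Real.rpow_one,
        Real.sqrt_eq_rpow]
    have hchain : 2 * ((|x j| : ℤ) : ℝ) ≤ (m:ℝ) := by
      push_cast
      have h1 := hxcoord j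
      have h2 : (N:ℝ) * lam ≤ (N:ℝ) * (Real.sqrt N * (D:ℝ) ^ ((1:ℝ)/N)) :=
        mul_le_mul_of_nonneg_left hlam_le (le_of_lt hN')
      have h3 : 2 * ((N:ℝ) * (Real.sqrt N * (D:ℝ) ^ ((1:ℝ)/N))) ≤ (m:ℝ) := by
        rw [h32] at hmsize
        linarith
      linarith
    exact_mod_cast hchain
  choose s hs1 hs2 using fun j => aux_spin m hm (x j) (hfin j)
  refine ⟨s, x, hs1, hs2, hx0, ?_⟩
  rw [hlamdef]
  exact hxmin'
end

section
/- Let b_1, …, b_N ∈ ℝ^N be linearly independent vectors forming the rows of a matrix B with Gram matrix G = B·Bᵀ, and let k ∈ ℕ. Consider the diagonal problem-Hamiltonian matrix H_P, indexed by configurations s ∈ ({0,1}^{k+1})^N, whose diagonal entry at s is x(s)ᵀ G x(s), where x(s)_j = Σ_{p=0}^{k} 2^p · s_{p,j} − 2^k is the binary-encoded value of the j-th qudit. Then the set of diagonal entries (equivalently, the set of eigenvalues) of H_P equals the set of squared Euclidean norms {‖x·B‖² : x ∈ ℤ^N, −2^k ≤ x_j ≤ 2^k − 1 for all j} of the lattice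 vectors whose coefficients lie in the encoded range. -/
open Matrix Real Finset

/-- The binary-encoded coefficient vector of a qubit configuration
`s ∈ ({0,1}^{k+1})^N`: the `j`-th qudit value is `∑_p 2^p·s_{p,j} − 2^k`. -/
def binCoeff {N k : ℕ} (s : Fin N → Fin (k + 1) → ({0, 1} : Finset ℤ)) :
    Fin N → ℤ :=
  fun j => (∑ p : Fin (k + 1), 2 ^ (p : ℕ) * (s j p : ℤ)) - 2 ^ k

lemma bits_sum (m : ℕ) : ∀ n : ℕ, n < 2 ^ m →
    ∑ p ∈ Finset.range m, 2 ^ p * (n / 2 ^ p % 2) = n := by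
  induction m with
  | zero => intro n hn; interval_cases n; simp
  | succ m ih =>
    intro n hn
    rw [Finset.sum_range_succ']
    have h2 : ∀ p, 2 ^ (p + 1) * (n / 2 ^ (p + 1) % 2)
        = 2 * (2 ^ p * ((n / 2) / 2 ^ p % 2)) := by
      intro p
      rw [Nat.div_div_eq_div_mul, pow_succ']; ring
    simp only [h2, ← Finset.mul_sum]
    rw [ih (n / 2) (Nat.div_lt_of_lt_mul (by rw [← pow_succ']; exact hn))]
    simp
    omega

lemma geom2 (n : ℕ) : ∑ p ∈ Finset.range n, (2:ℤ) ^ p = 2 ^ n - 1 := by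
  induction n with
  | zero => simp
  | succ n ih => rw [Finset.sum_range_succ, ih]; ring

lemma quad_eq (N : ℕ) (B : Matrix (Fin N) (Fin N) ℝ) (a : Fin N → ℝ) :
    ∑ i, ∑ j, a i * a j * (B * Bᵀ) i j = euclNorm (a ᵥ* B) ^ 2 := by
  have hnn : (0:ℝ) ≤ ∑ l, (a ᵥ* B) l ^ 2 :=
    Finset.sum_nonneg fun l _ => sq_nonneg _
  rw [euclNorm, Real.sq_sqrt hnn]
  simp only [Matrix.mul_apply, Matrix.transpose_apply, Matrix.vecMul, dotProduct,
    sq, Finset.sum_mul_sum, Finset.mul_sum, Finset.sum_mul]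
  conv_rhs => rw [Finset.sum_comm]
  refine Finset.sum_congr rfl fun i _ => ?_
  conv_rhs => rw [Finset.sum_comm]
  refine Finset.sum_congr rfl fun j _ => ?_
  refine Finset.sum_congr rfl fun l _ => ?_
  ring

/-- the set of diagonal entries (equivalently, eigenvalues) of the
diagonal problem Hamiltonian `H_P`, whose entry at configuration `s` is
`x(s)ᵀ G x(s)` with `G = B·Bᵀ`, equals the set of squared Euclidean norms
`{‖x·B‖² : x ∈ ℤ^N, −2^k ≤ x_j ≤ 2^k − 1}` of the lattice vectors whose
coefficients lie in the binary-encoded range. -/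
theorem binary_problem_hamiltonian_spectrum (N k : ℕ)
    (B : Matrix (Fin N) (Fin N) ℝ)
    (hB : LinearIndependent ℝ (fun i : Fin N => B i))
    (G : Matrix (Fin N) (Fin N) ℝ) (hG : G = B * Bᵀ) :
    Set.range
        (fun s : Fin N → Fin (k + 1) → ({0, 1} : Finset ℤ) =>
          ∑ i, ∑ j, (binCoeff s i : ℝ) * (binCoeff s j : ℝ) * G i j)
      = {r : ℝ | ∃ x : Fin N → ℤ,
          (∀ j, -(2 ^ k : ℤ) ≤ x j ∧ x j ≤ 2 ^ k - 1) ∧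
          r = euclNorm ((fun i => (x i : ℝ)) ᵥ* B) ^ 2} := by
  subst hG
  ext r
  simp only [Set.mem_range, Set.mem_setOf_eq]
  constructor
  · rintro ⟨s, rfl⟩
    refine ⟨binCoeff s, fun j => ?_,
      quad_eq N B (fun i => (binCoeff s i : ℝ))⟩
    have h01 : ∀ p : Fin (k+1), (0:ℤ) ≤ (s j p : ℤ) ∧ (s j p : ℤ) ≤ 1 := by
      intro p
      have := (s j p).2
      simp only [Finset.mem_insert, Finset.mem_singleton] at this
      rcases this with h | h <;> simp [h]
    have hlo : (0:ℤ) ≤ ∑ p : Fin (k+1), 2 ^ (p:ℕ) * (s j p : ℤ) :=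
      Finset.sum_nonneg fun p _ => mul_nonneg (by positivity) (h01 p).1
    have hhi : ∑ p : Fin (k+1), 2 ^ (p:ℕ) * (s j p : ℤ)
        ≤ ∑ p : Fin (k+1), 2 ^ (p:ℕ) := by
      refine Finset.sum_le_sum fun p _ => ?_
      calc 2 ^ (p:ℕ) * (s j p : ℤ) ≤ 2 ^ (p:ℕ) * 1 :=
            mul_le_mul_of_nonneg_left (h01 p).2 (by positivity)
        _ = 2 ^ (p:ℕ) := mul_one _
    have hgeom : ∑ p : Fin (k+1), (2:ℤ) ^ (p:ℕ) = 2 ^ (k+1) - 1 := by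
      rw [Fin.sum_univ_eq_sum_range]; exact geom2 (k+1)
    rw [hgeom] at hhi
    have hpow : (2:ℤ) ^ (k+1) = 2 * 2 ^ k := by ring
    constructor
    · simp only [binCoeff]; linarith
    · simp only [binCoeff]; linarith
  · rintro ⟨x, hx, rfl⟩
    set m : Fin N → ℕ := fun j => (x j + 2 ^ k).toNat with hm
    have hmz : ∀ j, (m j : ℤ) = x j + 2 ^ k := by
      intro j
      exact Int.toNat_of_nonneg (by linarith [(hx j).1])
    have hmlt : ∀ j, m j < 2 ^ (k + 1) := by
      intro j
      have hz : (m j : ℤ) < 2 ^ (k + 1) := by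
        rw [hmz j]
        have : (2:ℤ) ^ (k+1) = 2 * 2 ^ k := by ring
        linarith [(hx j).2]
      exact_mod_cast hz
    refine ⟨fun j p => ⟨(m j / 2 ^ (p:ℕ) % 2 : ℕ), by
      simp only [Finset.mem_insert, Finset.mem_singleton]
      rcases Nat.mod_two_eq_zero_or_one (m j / 2 ^ (p:ℕ)) with h | h <;> simp [h]⟩, ?_⟩
    have hbc : binCoeff (k := k) (fun j (p : Fin (k+1)) => (⟨(m j / 2 ^ (p:ℕ) % 2 : ℕ), by
        simp only [Finset.mem_insert, Finset.mem_singleton]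
        rcases Nat.mod_two_eq_zero_or_one (m j / 2 ^ (p:ℕ)) with h | h <;> simp [h]⟩ :
          ({0,1} : Finset ℤ))) = x := by
      funext j
      simp only [binCoeff]
      have hsum : ∑ p : Fin (k+1), (2:ℤ) ^ (p:ℕ) * ((m j / 2 ^ (p:ℕ) % 2 : ℕ) : ℤ)
          = (m j : ℤ) := by
        have hn := bits_sum (k+1) (m j) (hmlt j)
        calc ∑ p : Fin (k+1), (2:ℤ) ^ (p:ℕ) * ((m j / 2 ^ (p:ℕ) % 2 : ℕ) : ℤ)
            = ((∑ p ∈ Finset.range (k+1), 2 ^ p * (m j / 2 ^ p % 2) : ℕ) : ℤ) := by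
              push_cast
              exact Fin.sum_univ_eq_sum_range
                (fun p => (2:ℤ) ^ p * ((m j : ℤ) / 2 ^ p % 2)) (k+1)
          _ = (m j : ℤ) := by rw [hn]
      rw [hsum, hmz j]; ring
    rw [hbc, quad_eq N B]
end
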